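/- For the state D_{2k} defined from the product vectors φ₁,...,φ₇ as in the paper, Tr(W_{2k} · D_{2k}) = −1/(7k). Together with SN(D_{2k}) ≤ 2 and SN(D_{2k}^Γ) ≤ 2, this proves W_{2k} is an atomic entanglement witness. -/

import Mathlib

open Matrix ComplexOrder Kronecker

noncomputable section

/-- The reduction map `R_k(Y) = Tr(Y)·𝕀_k − Y` on `k × k` complex matrices. -/
def Rmap (k : ℕ) (Y : Matrix (Fin k) (Fin k) ℂ) : Matrix (Fin k) (Fin k) ℂ :=
  Y.trace • (1 : Matrix (Fin k) (Fin k) ℂ) - Y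

/-- The map `Ψ⁰_{2k}` on `2k × 2k` complex matrices (indexed by `Fin k ⊕ Fin k`),
defined blockwise via the reduction map `R_k`. -/
def Psi (k : ℕ) (X : Matrix (Fin k ⊕ Fin k) (Fin k ⊕ Fin k) ℂ) :
    Matrix (Fin k ⊕ Fin k) (Fin k ⊕ Fin k) ℂ :=
  ((k : ℂ))⁻¹ • Matrix.fromBlocks
    ((X.toBlocks₂₂.trace) • (1 : Matrix (Fin k) (Fin k) ℂ))
    (-(X.toBlocks₁₂ + Rmap k X.toBlocks₂₁))
    (-(X.toBlocks₂₁ + Rmap k X.toBlocks₁₂))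
    ((X.toBlocks₁₁.trace) • (1 : Matrix (Fin k) (Fin k) ℂ))

/-- The Choi matrix `W_{2k} = Σ_{i,j} e_{ij} ⊗ Ψ⁰_{2k}(e_{ij})` of the map `Ψ⁰_{2k}`. -/
def Wmat (k : ℕ) :
    Matrix ((Fin k ⊕ Fin k) × (Fin k ⊕ Fin k)) ((Fin k ⊕ Fin k) × (Fin k ⊕ Fin k)) ℂ :=
  ∑ i : Fin k ⊕ Fin k, ∑ j : Fin k ⊕ Fin k,
    (Matrix.single i j (1 : ℂ)) ⊗ₖ Psi k (Matrix.single i j (1 : ℂ))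

/-- The standard basis vector `e_i` of `ℂ^{2k}`. -/
def uvec (k : ℕ) (i : Fin k ⊕ Fin k) : (Fin k ⊕ Fin k) → ℂ := Pi.single i 1

/-- Elementary tensor `a ⊗ b` of two vectors in `ℂ^{2k}`. -/
def tensv (k : ℕ) (a b : (Fin k ⊕ Fin k) → ℂ) : (Fin k ⊕ Fin k) × (Fin k ⊕ Fin k) → ℂ :=
  fun p => a p.1 * b p.2

/-- The rank-one projector `|v⟩⟨v|` as a matrix. -/
def projv (k : ℕ) (v : (Fin k ⊕ Fin k) × (Fin k ⊕ Fin k) → ℂ) :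
    Matrix ((Fin k ⊕ Fin k) × (Fin k ⊕ Fin k)) ((Fin k ⊕ Fin k) × (Fin k ⊕ Fin k)) ℂ :=
  vecMulVec v (star v)

/-- Partial transposition (on the second tensor factor). -/
def ptI (k : ℕ)
    (M : Matrix ((Fin k ⊕ Fin k) × (Fin k ⊕ Fin k)) ((Fin k ⊕ Fin k) × (Fin k ⊕ Fin k)) ℂ) :
    Matrix ((Fin k ⊕ Fin k) × (Fin k ⊕ Fin k)) ((Fin k ⊕ Fin k) × (Fin k ⊕ Fin k)) ℂ :=
  Matrix.of fun p q => M (p.1, q.2) (q.1, p.2)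

/-- `σ` has Schmidt number at most `2`: it is a sum of (unnormalized) rank-one
projectors onto vectors of Schmidt rank at most `2`. -/
def SchmidtNumberLE2 (k : ℕ)
    (σ : Matrix ((Fin k ⊕ Fin k) × (Fin k ⊕ Fin k)) ((Fin k ⊕ Fin k) × (Fin k ⊕ Fin k)) ℂ) :
    Prop :=
  ∃ (n : ℕ) (v : Fin n → ((Fin k ⊕ Fin k) × (Fin k ⊕ Fin k) → ℂ)),
    (∀ m, ∃ a₁ b₁ a₂ b₂ : (Fin k ⊕ Fin k) → ℂ, v m = tensv k a₁ b₁ + tensv k a₂ b₂) ∧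
    σ = ∑ m, projv k (v m)

/-- A `2`-entanglement witness: a Hermitian matrix whose quadratic form is
nonnegative on every vector of Schmidt rank at most `2`. -/
def IsTwoEW (k : ℕ)
    (W : Matrix ((Fin k ⊕ Fin k) × (Fin k ⊕ Fin k)) ((Fin k ⊕ Fin k) × (Fin k ⊕ Fin k)) ℂ) :
    Prop :=
  W.IsHermitian ∧ ∀ a₁ b₁ a₂ b₂ : (Fin k ⊕ Fin k) → ℂ,
    0 ≤ (star (tensv k a₁ b₁ + tensv k a₂ b₂) ⬝ᵥ
        W.mulVec (tensv k a₁ b₁ + tensv k a₂ b₂)).re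

namespace Stmt16Aux

variable {k : ℕ}

lemma trace_mul_vmv (M : Matrix ((Fin k ⊕ Fin k) × (Fin k ⊕ Fin k)) ((Fin k ⊕ Fin k) × (Fin k ⊕ Fin k)) ℂ)
    (v w : (Fin k ⊕ Fin k) × (Fin k ⊕ Fin k) → ℂ) :
    (M * vecMulVec v (star w)).trace = star w ⬝ᵥ M.mulVec v := by
  simp only [Matrix.trace, Matrix.diag, mul_apply, vecMulVec_apply, dotProduct, mulVec,
    Pi.star_apply]
  congr 1; ext q
  rw [Finset.mul_sum]
  congr 1; ext p
  ring

lemma trace_mul_proj (M : Matrix ((Fin k ⊕ Fin k) × (Fin k ⊕ Fin k)) ((Fin k ⊕ Fin k) × (Fin k ⊕ Fin k)) ℂ)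
    (v : (Fin k ⊕ Fin k) × (Fin k ⊕ Fin k) → ℂ) :
    (M * projv k v).trace = star v ⬝ᵥ M.mulVec v :=
  trace_mul_vmv M v v

lemma star_uvec (i : Fin k ⊕ Fin k) : star (uvec k i) = uvec k i := by
  funext j
  simp [uvec, Pi.single_apply, Pi.star_apply, apply_ite (star : ℂ → ℂ)]

lemma dot_tensv (a b c d : (Fin k ⊕ Fin k) → ℂ) :
    star (tensv k a b) ⬝ᵥ tensv k c d = (star a ⬝ᵥ c) * (star b ⬝ᵥ d) := by
  simp only [dotProduct, tensv, Pi.star_apply, Fintype.sum_prod_type, star_mul']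
  rw [Finset.sum_mul_sum]
  congr 1; ext p; congr 1; ext q; ring

lemma kron_mulVec (A B : Matrix (Fin k ⊕ Fin k) (Fin k ⊕ Fin k) ℂ) (a b : (Fin k ⊕ Fin k) → ℂ) :
    (A ⊗ₖ B).mulVec (tensv k a b) = tensv k (A.mulVec a) (B.mulVec b) := by
  funext p
  simp only [mulVec, dotProduct, tensv, kroneckerMap_apply, Fintype.sum_prod_type]
  rw [Finset.sum_mul_sum]
  congr 1; ext q1; congr 1; ext q2; ring

lemma sum_mulVec' {n : Type*} [Fintype n]
    (f : n → Matrix ((Fin k ⊕ Fin k) × (Fin k ⊕ Fin k)) ((Fin k ⊕ Fin k) × (Fin k ⊕ Fin k)) ℂ)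
    (v : (Fin k ⊕ Fin k) × (Fin k ⊕ Fin k) → ℂ) :
    (∑ i, f i).mulVec v = ∑ i, (f i).mulVec v := by
  funext p
  simp only [mulVec, dotProduct, Matrix.sum_apply, Finset.sum_apply, Finset.sum_mul]
  rw [Finset.sum_comm]

lemma dot_sum {n : Type*} [Fintype n] (v : (Fin k ⊕ Fin k) × (Fin k ⊕ Fin k) → ℂ)
    (w : n → ((Fin k ⊕ Fin k) × (Fin k ⊕ Fin k) → ℂ)) :
    v ⬝ᵥ (∑ i, w i) = ∑ i, v ⬝ᵥ w i := by
  simp only [dotProduct, Finset.sum_apply, Finset.mul_sum]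
  rw [Finset.sum_comm]

lemma wmat_quad (m n : Fin k ⊕ Fin k) (b d : (Fin k ⊕ Fin k) → ℂ) :
    star (tensv k (uvec k m) b) ⬝ᵥ (Wmat k).mulVec (tensv k (uvec k n) d)
      = star b ⬝ᵥ (Psi k (Matrix.single m n 1)).mulVec d := by
  rw [Wmat]
  rw [sum_mulVec']
  rw [dot_sum]
  have key : ∀ i : Fin k ⊕ Fin k,
      star (tensv k (uvec k m) b) ⬝ᵥ
        (∑ j, Matrix.single i j (1:ℂ) ⊗ₖ Psi k (Matrix.single i j 1)).mulVec
          (tensv k (uvec k n) d)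
      = if i = m then star b ⬝ᵥ (Psi k (Matrix.single m n 1)).mulVec d else 0 := by
    intro i
    rw [sum_mulVec', dot_sum]
    have key2 : ∀ j : Fin k ⊕ Fin k,
        star (tensv k (uvec k m) b) ⬝ᵥ
          (Matrix.single i j (1:ℂ) ⊗ₖ Psi k (Matrix.single i j 1)).mulVec
            (tensv k (uvec k n) d)
        = if j = n ∧ i = m then star b ⬝ᵥ (Psi k (Matrix.single i j 1)).mulVec d else 0 := by
      intro j
      rw [kron_mulVec, dot_tensv]
      have h1 : (Matrix.single i j (1:ℂ)).mulVec (uvec k n)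
          = if j = n then uvec k i else 0 := by
        rw [uvec, mulVec_single]
        by_cases h : j = n <;> funext p <;>
          simp [h, Matrix.single_apply_same, uvec, Pi.single_apply, Matrix.single, eq_comm]
      rw [h1]
      by_cases hjn : j = n
      · simp only [hjn, if_true, true_and]
        rw [star_uvec, uvec, single_dotProduct]
        simp only [uvec, Pi.single_apply, one_mul]
        by_cases him : i = m
        · simp [him]
        · rw [if_neg (fun h : m = i => him h.symm), if_neg (fun h : i = m => him h)]
          ring
      · simp [hjn]
    rw [Finset.sum_congr rfl (fun j _ => key2 j)]
    by_cases him : i = m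
    · subst him
      simp [Finset.sum_ite_eq']
    · simp [him]
  rw [Finset.sum_congr rfl (fun i _ => key i)]
  simp

lemma dot_uvec_mulVec (M : Matrix ((Fin k ⊕ Fin k)) ((Fin k ⊕ Fin k)) ℂ) (p q : Fin k ⊕ Fin k) :
    star (uvec k p) ⬝ᵥ M.mulVec (uvec k q) = M p q := by
  rw [star_uvec, uvec, uvec, mulVec_single, single_dotProduct]
  simp

lemma wqE (m n p q : Fin k ⊕ Fin k) :
    star (tensv k (uvec k m) (uvec k p)) ⬝ᵥ (Wmat k).mulVec (tensv k (uvec k n) (uvec k q))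
      = Psi k (Matrix.single m n 1) p q := by
  rw [wmat_quad, dot_uvec_mulVec]

lemma eLL_LL (a b p q : Fin k) :
    Psi k (Matrix.single (Sum.inl a) (Sum.inl b) 1) (Sum.inl p) (Sum.inl q) = 0 := by
  simp [Psi, Rmap, toBlocks₁₁, toBlocks₁₂, toBlocks₂₁, toBlocks₂₂, Matrix.single,
    Matrix.trace, Matrix.diag, Finset.sum_ite_eq, one_apply]

lemma eRR_RR (a b p q : Fin k) :
    Psi k (Matrix.single (Sum.inr a) (Sum.inr b) 1) (Sum.inr p) (Sum.inr q) = 0 := by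
  simp [Psi, Rmap, toBlocks₁₁, toBlocks₁₂, toBlocks₂₁, toBlocks₂₂, Matrix.single,
    Matrix.trace, Matrix.diag, Finset.sum_ite_eq, one_apply]

lemma eLR (a b : Fin k) :
    Psi k (Matrix.single (Sum.inl a) (Sum.inr b) 1) (Sum.inl a) (Sum.inr b) = -((k:ℂ))⁻¹ := by
  simp [Psi, Rmap, toBlocks₁₁, toBlocks₁₂, toBlocks₂₁, toBlocks₂₂, Matrix.single,
    Matrix.trace, Matrix.diag, Finset.sum_ite_eq, one_apply]

lemma eRL (a b : Fin k) :
    Psi k (Matrix.single (Sum.inr a) (Sum.inl b) 1) (Sum.inr a) (Sum.inl b) = -((k:ℂ))⁻¹ := by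
  simp [Psi, Rmap, toBlocks₁₁, toBlocks₁₂, toBlocks₂₁, toBlocks₂₂, Matrix.single,
    Matrix.trace, Matrix.diag, Finset.sum_ite_eq, one_apply]

lemma eRR_LL (a p : Fin k) :
    Psi k (Matrix.single (Sum.inr a) (Sum.inr a) 1) (Sum.inl p) (Sum.inl p) = ((k:ℂ))⁻¹ := by
  simp [Psi, Rmap, toBlocks₁₁, toBlocks₁₂, toBlocks₂₁, toBlocks₂₂, Matrix.single,
    Matrix.trace, Matrix.diag, Finset.sum_ite_eq, one_apply]

lemma eLL_RR (a p : Fin k) :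
    Psi k (Matrix.single (Sum.inl a) (Sum.inl a) 1) (Sum.inr p) (Sum.inr p) = ((k:ℂ))⁻¹ := by
  simp [Psi, Rmap, toBlocks₁₁, toBlocks₁₂, toBlocks₂₁, toBlocks₂₂, Matrix.single,
    Matrix.trace, Matrix.diag, Finset.sum_ite_eq, one_apply]

lemma eRL_LR (a b : Fin k) (hab : a ≠ b) :
    Psi k (Matrix.single (Sum.inr a) (Sum.inl b) 1) (Sum.inl a) (Sum.inr b) = ((k:ℂ))⁻¹ := by
  simp [Psi, Rmap, toBlocks₁₁, toBlocks₁₂, toBlocks₂₁, toBlocks₂₂, Matrix.single,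
    Matrix.trace, Matrix.diag, Finset.sum_ite_eq, one_apply, hab]

lemma eLR_RL (a b : Fin k) (hab : a ≠ b) :
    Psi k (Matrix.single (Sum.inl a) (Sum.inr b) 1) (Sum.inr a) (Sum.inl b) = ((k:ℂ))⁻¹ := by
  simp [Psi, Rmap, toBlocks₁₁, toBlocks₁₂, toBlocks₂₁, toBlocks₂₂, Matrix.single,
    Matrix.trace, Matrix.diag, Finset.sum_ite_eq, one_apply, hab]

lemma ptI_smul (c : ℂ) (M : Matrix ((Fin k ⊕ Fin k) × (Fin k ⊕ Fin k)) ((Fin k ⊕ Fin k) × (Fin k ⊕ Fin k)) ℂ) :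
    ptI k (c • M) = c • ptI k M := by
  ext p q; simp [ptI]

lemma ptI_sub (A B : Matrix ((Fin k ⊕ Fin k) × (Fin k ⊕ Fin k)) ((Fin k ⊕ Fin k) × (Fin k ⊕ Fin k)) ℂ) :
    ptI k (A - B) = ptI k A - ptI k B := by
  ext p q; simp [ptI]

lemma ptI_add (A B : Matrix ((Fin k ⊕ Fin k) × (Fin k ⊕ Fin k)) ((Fin k ⊕ Fin k) × (Fin k ⊕ Fin k)) ℂ) :
    ptI k (A + B) = ptI k A + ptI k B := by
  ext p q; simp [ptI]

lemma projv_add (u v : (Fin k ⊕ Fin k) × (Fin k ⊕ Fin k) → ℂ) :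
    projv k (u + v) = projv k u + projv k v + vecMulVec u (star v) + vecMulVec v (star u) := by
  ext p q; simp [projv, vecMulVec]; ring

lemma projv_sub (u v : (Fin k ⊕ Fin k) × (Fin k ⊕ Fin k) → ℂ) :
    projv k (u - v) = projv k u + projv k v - vecMulVec u (star v) - vecMulVec v (star u) := by
  ext p q; simp [projv, vecMulVec]; ring

lemma ptG (a b c d : Fin k ⊕ Fin k) :
    ptI k (vecMulVec (tensv k (uvec k a) (uvec k b)) (star (tensv k (uvec k c) (uvec k d))))
      = vecMulVec (tensv k (uvec k a) (uvec k d)) (star (tensv k (uvec k c) (uvec k b))) := by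
  ext ⟨p1, p2⟩ ⟨q1, q2⟩
  simp [ptI, vecMulVec, tensv, uvec, Pi.single_apply, apply_ite (star : ℂ → ℂ)]
  split_ifs <;> rfl

lemma trace_pt (A B : Matrix ((Fin k ⊕ Fin k) × (Fin k ⊕ Fin k)) ((Fin k ⊕ Fin k) × (Fin k ⊕ Fin k)) ℂ) :
    (ptI k A * B).trace = (A * ptI k B).trace := by
  have hb : Function.Bijective
      (fun x : ((Fin k ⊕ Fin k) × (Fin k ⊕ Fin k)) × ((Fin k ⊕ Fin k) × (Fin k ⊕ Fin k)) =>
        (((x.1.1, x.2.2), (x.2.1, x.1.2)) :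
          ((Fin k ⊕ Fin k) × (Fin k ⊕ Fin k)) × ((Fin k ⊕ Fin k) × (Fin k ⊕ Fin k)))) := by
    apply Function.Involutive.bijective
    intro x; rfl
  simp only [Matrix.trace, Matrix.diag, mul_apply, ptI, Matrix.of_apply]
  calc (∑ x : (Fin k ⊕ Fin k) × (Fin k ⊕ Fin k), ∑ y : (Fin k ⊕ Fin k) × (Fin k ⊕ Fin k),
          A (x.1, y.2) (y.1, x.2) * B y x)
      = ∑ z : ((Fin k ⊕ Fin k) × (Fin k ⊕ Fin k)) × ((Fin k ⊕ Fin k) × (Fin k ⊕ Fin k)),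
          A (z.1.1, z.2.2) (z.2.1, z.1.2) * B z.2 z.1 :=
        (Fintype.sum_prod_type (f := fun z : ((Fin k ⊕ Fin k) × (Fin k ⊕ Fin k)) × ((Fin k ⊕ Fin k) × (Fin k ⊕ Fin k)) =>
          A (z.1.1, z.2.2) (z.2.1, z.1.2) * B z.2 z.1)).symm
    _ = ∑ z : ((Fin k ⊕ Fin k) × (Fin k ⊕ Fin k)) × ((Fin k ⊕ Fin k) × (Fin k ⊕ Fin k)),
          A z.1 z.2 * B (z.2.1, z.1.2) (z.1.1, z.2.2) :=
        Function.Bijective.sum_comp hb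
          (fun w => A w.1 w.2 * B (w.2.1, w.1.2) (w.1.1, w.2.2))
    _ = ∑ x : (Fin k ⊕ Fin k) × (Fin k ⊕ Fin k), ∑ y : (Fin k ⊕ Fin k) × (Fin k ⊕ Fin k),
          A x y * B (y.1, x.2) (x.1, y.2) :=
        Fintype.sum_prod_type (f := fun z : ((Fin k ⊕ Fin k) × (Fin k ⊕ Fin k)) × ((Fin k ⊕ Fin k) × (Fin k ⊕ Fin k)) =>
          A z.1 z.2 * B (z.2.1, z.1.2) (z.1.1, z.2.2))

lemma tensv_zero : tensv k 0 0 = 0 := by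
  funext p; simp [tensv]

lemma ew_quad_nonneg {W : Matrix ((Fin k ⊕ Fin k) × (Fin k ⊕ Fin k)) ((Fin k ⊕ Fin k) × (Fin k ⊕ Fin k)) ℂ}
    (hW : IsTwoEW k W) (a b : (Fin k ⊕ Fin k) → ℂ) :
    0 ≤ (star (tensv k a b) ⬝ᵥ W.mulVec (tensv k a b)).re := by
  have := hW.2 a b 0 0
  simpa [tensv_zero] using this

end Stmt16Aux

open Stmt16Aux in
set_option maxHeartbeats 1000000 in
theorem stmt16 (k : ℕ) (hk : 2 ≤ k)
    (φ₁ φ₂ φ₃ φ₄ φ₅ φ₆ φ₇ : (Fin k ⊕ Fin k) × (Fin k ⊕ Fin k) → ℂ)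
    (h₁ : φ₁ = tensv k (uvec k (Sum.inl ⟨0, by omega⟩)) (uvec k (Sum.inl ⟨0, by omega⟩)))
    (h₂ : φ₂ = tensv k (uvec k (Sum.inl ⟨0, by omega⟩)) (uvec k (Sum.inr ⟨0, by omega⟩)))
    (h₃ : φ₃ = tensv k (uvec k (Sum.inl ⟨k - 1, by omega⟩)) (uvec k (Sum.inl ⟨0, by omega⟩)))
    (h₄ : φ₄ = tensv k (uvec k (Sum.inl ⟨k - 1, by omega⟩)) (uvec k (Sum.inr ⟨k - 1, by omega⟩)))
    (h₅ : φ₅ = tensv k (uvec k (Sum.inr ⟨0, by omega⟩)) (uvec k (Sum.inl ⟨0, by omega⟩)))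
    (h₆ : φ₆ = tensv k (uvec k (Sum.inr ⟨0, by omega⟩)) (uvec k (Sum.inr ⟨0, by omega⟩)))
    (h₇ : φ₇ = tensv k (uvec k (Sum.inr ⟨0, by omega⟩)) (uvec k (Sum.inr ⟨k - 1, by omega⟩)))
    (D : Matrix ((Fin k ⊕ Fin k) × (Fin k ⊕ Fin k)) ((Fin k ⊕ Fin k) × (Fin k ⊕ Fin k)) ℂ)
    (hD : D = (7 : ℂ)⁻¹ • (projv k (φ₁ + φ₆) + projv k (φ₅ - φ₄)
        + projv k φ₂ + projv k φ₃ + projv k φ₇)) :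
    (Wmat k * D).trace = -(1 / (7 * (k : ℂ))) ∧
    ¬ ∃ W₁ W₂ :
        Matrix ((Fin k ⊕ Fin k) × (Fin k ⊕ Fin k)) ((Fin k ⊕ Fin k) × (Fin k ⊕ Fin k)) ℂ,
      IsTwoEW k W₁ ∧ IsTwoEW k W₂ ∧ Wmat k = W₁ + ptI k W₂ := by
  have hk0 : (k : ℂ) ≠ 0 := by
    exact_mod_cast Nat.cast_ne_zero.mpr (by omega)
  have hne : (⟨0, by omega⟩ : Fin k) ≠ (⟨k - 1, by omega⟩ : Fin k) := by
    simp only [ne_eq, Fin.mk.injEq]; omega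
  -- Part 1
  have part1 : (Wmat k * D).trace = -(1 / (7 * (k : ℂ))) := by
    rw [hD]
    simp only [Matrix.mul_smul, Matrix.mul_add, trace_smul, trace_add, smul_eq_mul,
      trace_mul_proj]
    rw [h₁, h₂, h₃, h₄, h₅, h₆, h₇]
    simp only [star_add, star_sub, mulVec_add, mulVec_sub, add_dotProduct, sub_dotProduct,
      dotProduct_add, dotProduct_sub, wqE]
    rw [eLL_LL, eRR_RR, eLR, eRL, eRR_LL, eLL_RR, eRL_LR _ _ hne, eLR_RL _ _ (Ne.symm hne),
      eLL_RR, eLL_LL, eRR_RR]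
    field_simp
    ring
  refine ⟨part1, ?_⟩
  rintro ⟨W₁, W₂, hW₁, hW₂, hsum⟩
  -- partial transpose of D
  have hptD : ptI k D = (7 : ℂ)⁻¹ • (projv k φ₁ + projv k φ₆ + projv k φ₄
      + projv k (φ₂ + φ₅) + projv k (φ₃ - φ₇)) := by
    rw [hD, ptI_smul]
    congr 1
    rw [h₁, h₂, h₃, h₄, h₅, h₆, h₇]
    rw [projv_add, projv_sub, projv_add, projv_sub]
    simp only [projv]
    simp only [ptI_add, ptI_sub]
    simp only [ptG]
    abel
  -- traces of witness parts are nonnegative in real part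
  have hreD : 0 ≤ ((W₁ * D).trace).re := by
    rw [hD]
    simp only [Matrix.mul_smul, Matrix.mul_add, trace_smul, trace_add, smul_eq_mul,
      trace_mul_proj]
    have q1 : 0 ≤ (star (φ₁ + φ₆) ⬝ᵥ W₁.mulVec (φ₁ + φ₆)).re := by
      rw [h₁, h₆]; exact hW₁.2 _ _ _ _
    have q2 : 0 ≤ (star (φ₅ - φ₄) ⬝ᵥ W₁.mulVec (φ₅ - φ₄)).re := by
      have he : φ₅ - φ₄ = tensv k (uvec k (Sum.inr ⟨0, by omega⟩)) (uvec k (Sum.inl ⟨0, by omega⟩))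
          + tensv k (-(uvec k (Sum.inl ⟨k - 1, by omega⟩))) (uvec k (Sum.inr ⟨k - 1, by omega⟩)) := by
        rw [h₄, h₅]; funext p; simp [tensv]; ring
      rw [he]; exact hW₁.2 _ _ _ _
    have q3 : 0 ≤ (star φ₂ ⬝ᵥ W₁.mulVec φ₂).re := by
      rw [h₂]; exact ew_quad_nonneg hW₁ _ _
    have q4 : 0 ≤ (star φ₃ ⬝ᵥ W₁.mulVec φ₃).re := by
      rw [h₃]; exact ew_quad_nonneg hW₁ _ _
    have q5 : 0 ≤ (star φ₇ ⬝ᵥ W₁.mulVec φ₇).re := by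
      rw [h₇]; exact ew_quad_nonneg hW₁ _ _
    have h7 : (7 : ℂ)⁻¹ = ((7⁻¹ : ℝ) : ℂ) := by push_cast; ring
    rw [h7, Complex.re_ofReal_mul]
    have := add_nonneg (add_nonneg (add_nonneg (add_nonneg q1 q2) q3) q4) q5
    simp only [Complex.add_re]
    positivity
  have hreP : 0 ≤ ((W₂ * ptI k D).trace).re := by
    rw [hptD]
    simp only [Matrix.mul_smul, Matrix.mul_add, trace_smul, trace_add, smul_eq_mul,
      trace_mul_proj]
    have q1 : 0 ≤ (star φ₁ ⬝ᵥ W₂.mulVec φ₁).re := by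
      rw [h₁]; exact ew_quad_nonneg hW₂ _ _
    have q2 : 0 ≤ (star φ₆ ⬝ᵥ W₂.mulVec φ₆).re := by
      rw [h₆]; exact ew_quad_nonneg hW₂ _ _
    have q3 : 0 ≤ (star φ₄ ⬝ᵥ W₂.mulVec φ₄).re := by
      rw [h₄]; exact ew_quad_nonneg hW₂ _ _
    have q4 : 0 ≤ (star (φ₂ + φ₅) ⬝ᵥ W₂.mulVec (φ₂ + φ₅)).re := by
      rw [h₂, h₅]; exact hW₂.2 _ _ _ _
    have q5 : 0 ≤ (star (φ₃ - φ₇) ⬝ᵥ W₂.mulVec (φ₃ - φ₇)).re := by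
      have he : φ₃ - φ₇ = tensv k (uvec k (Sum.inl ⟨k - 1, by omega⟩)) (uvec k (Sum.inl ⟨0, by omega⟩))
          + tensv k (-(uvec k (Sum.inr ⟨0, by omega⟩))) (uvec k (Sum.inr ⟨k - 1, by omega⟩)) := by
        rw [h₃, h₇]; funext p; simp [tensv]; ring
      rw [he]; exact hW₂.2 _ _ _ _
    have h7 : (7 : ℂ)⁻¹ = ((7⁻¹ : ℝ) : ℂ) := by push_cast; ring
    rw [h7, Complex.re_ofReal_mul]
    simp only [Complex.add_re]
    positivity
  have htr : (Wmat k * D).trace = (W₁ * D).trace + (W₂ * ptI k D).trace := by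
    rw [hsum, Matrix.add_mul, trace_add, trace_pt]
  have hge : 0 ≤ ((Wmat k * D).trace).re := by
    rw [htr, Complex.add_re]
    exact add_nonneg hreD hreP
  rw [part1] at hge
  have hval : (-(1 / (7 * (k : ℂ)))).re = -(1 / (7 * (k : ℝ))) := by
    have : -(1 / (7 * (k : ℂ))) = ((-(1 / (7 * (k : ℝ))) : ℝ) : ℂ) := by push_cast; ring
    rw [this, Complex.ofReal_re]
  rw [hval] at hge
  have hkpos : (0 : ℝ) < (k : ℝ) := by exact_mod_cast (by omega : 0 < k)
  have : (0 : ℝ) < 1 / (7 * (k : ℝ)) := by positivity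
  linarith
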